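/- arXiv:2004.10227 — 11 statements merged into one kernel-verified Lean document; each statement's English description precedes it below -/
import Mathlib

section
/- Let G be a group and n ≥ 1. The conjugation quandle Conj(G) is n-locally reductive (i.e., (…((a▷b)▷b)…)▷b with n copies of b equals b for all a, b) if and only if G is an n-Engel group (i.e., [b,_n a] = 1 for all a, b ∈ G). -/
/-- The iterated Engel commutator: `engel b a 0 = a` and
`engel b a (k+1) = [b, engel b a k]`, where `[x, y] = x⁻¹ * y⁻¹ * x * y`. -/
def engel {G : Type*} [Group G] (b a : G) : ℕ → G
  | 0 => a
  | k + 1 => b⁻¹ * (engel b a k)⁻¹ * b * (engel b a k)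

lemma iterate_eq_engel {G : Type*} [Group G] (a b : G) (k : ℕ) :
    (fun x : G => x⁻¹ * b * x)^[k + 1] a = b * engel b a (k + 1) := by
  induction k with
  | zero => simp [engel, mul_assoc]
  | succ k ih =>
      rw [Function.iterate_succ_apply', ih]
      simp only [engel]
      group

/-- Let `G` be a group and `n ≥ 1`. The conjugation quandle `Conj(G)` (with
`x ▷ y = x⁻¹ * y * x`) is `n`-locally reductive, i.e. `(…((a ▷ b) ▷ b)…) ▷ b = b`
with `n` copies of `b` for all `a, b`, if and only if `G` is an `n`-Engel group,
i.e. `[b,_n a] = 1` for all `a, b ∈ G`. -/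
theorem conj_locally_reductive_iff_engel {G : Type*} [Group G] (n : ℕ) (hn : 1 ≤ n) :
    (∀ a b : G, (fun x : G => x⁻¹ * b * x)^[n] a = b) ↔
      (∀ a b : G, engel b a n = 1) := by
  obtain ⟨k, rfl⟩ := Nat.exists_eq_add_of_le hn
  rw [add_comm 1 k]
  constructor
  · intro h a b
    have := h a b
    rw [iterate_eq_engel] at this
    exact mul_left_cancel (a := b) (by simpa using this)
  · intro h a b
    rw [iterate_eq_engel, h, mul_one]
end

section
/- Let Q be a quandle, α a congruence on Q, and suppose the quotient quandle Q/α is n-locally reductive and every congruence class [a]_α (as a subquandle of Q) is m-locally reductive. Then Q is (n+m)-locally reductive. -/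
/-- Let `Q` be a quandle and `α` a congruence on `Q` (an equivalence relation compatible
with the operation and its inverse translations). If the quotient `Q/α` is `n`-locally
reductive and every congruence class (as a subquandle of `Q`) is `m`-locally reductive,
then `Q` is `(n+m)`-locally reductive. -/
theorem extension_locally_reductive {Q : Type*} (op : Q → Q → Q)
    (hidem : ∀ a, op a a = a)
    (hbij : ∀ a, Function.Bijective (op a))
    (hdist : ∀ a b c, op a (op b c) = op (op a b) (op a c))
    (α : Setoid Q)
    (hcong : ∀ a b c d, α.r a b → α.r c d → α.r (op a c) (op b d))
    (hcong' : ∀ a b c d x y, α.r a b → α.r c d → op a x = c → op b y = d → α.r x y)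
    (n m : ℕ)
    (hquot : ∀ a b : Q, α.r ((fun x => op x b)^[n] a) b)
    (hclass : ∀ a b : Q, α.r a b → (fun x => op x b)^[m] a = b) :
    ∀ a b : Q, (fun x => op x b)^[n + m] a = b := by
  intro a b
  rw [add_comm, Function.iterate_add_apply]
  exact hclass _ _ (hquot a b)
end

section
/- If every orbit of a quandle Q (under the action of the inner automorphism group) is an n-locally reductive subquandle, then Q is (n+1)-locally reductive. -/
/-- One step of the action generating the orbit: `q` is obtained from `p` by applying a
left translation by an element of `S`, or its inverse. -/
def orbRel {Q : Type*} (op : Q → Q → Q) (S : Set Q) (p q : Q) : Prop :=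
  ∃ s ∈ S, q = op s p ∨ p = op s q

/-- The orbit of `x` in the subquandle `S`: all elements reachable from `x` by the group
generated by the left translations by elements of `S` (and their inverses). -/
def OrbIn {Q : Type*} (op : Q → Q → Q) (S : Set Q) (x : Q) : Set Q :=
  {y | Relation.ReflTransGen (orbRel op S) x y}

/-- If every orbit of a quandle `Q` (under the action of the inner automorphism group)
is an `n`-locally reductive subquandle, then `Q` is `(n+1)`-locally reductive. -/
theorem orbits_locally_reductive {Q : Type*} (op : Q → Q → Q)
    (hidem : ∀ a, op a a = a)
    (hbij : ∀ a, Function.Bijective (op a))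
    (hdist : ∀ a b c, op a (op b c) = op (op a b) (op a c))
    (n : ℕ)
    (horb : ∀ a x y : Q, x ∈ OrbIn op Set.univ a → y ∈ OrbIn op Set.univ a →
      (fun z => op z y)^[n] x = y) :
    ∀ a b : Q, (fun z => op z b)^[n + 1] a = b := by
  intro a b
  rw [Function.iterate_succ_apply]
  exact horb b (op a b) b
    (Relation.ReflTransGen.single ⟨a, Set.mem_univ a, Or.inl rfl⟩)
    Relation.ReflTransGen.refl
end

section
/- Let Q be a quandle. If the inner automorphism group Inn(Q) is an n-Engel group, then Q is (n+1)-locally reductive. -/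
open Quandles

/-- The inner automorphism group of a quandle: the subgroup of permutations of `Q`
generated by the left translations `L_a`. -/
def InnGrp (Q : Type*) [Quandle Q] : Subgroup (Equiv.Perm Q) :=
  Subgroup.closure (Set.range fun a : Q => (Rack.act' a : Equiv.Perm Q))

lemma engel_map {G H : Type*} [Group G] [Group H] (f : G →* H) (b a : G) (k : ℕ) :
    f (engel b a k) = engel (f b) (f a) k := by
  induction k with
  | zero => rfl
  | succ k ih => simp [engel, ih]

/-- If the inner automorphism group `Inn(Q)` of a quandle `Q` is an `n`-Engel group,
then `Q` is `(n+1)`-locally reductive. -/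
theorem engel_inn_implies_locally_reductive {Q : Type*} [Quandle Q] (n : ℕ)
    (hEngel : ∀ g h : InnGrp Q, engel h g n = 1) :
    ∀ a b : Q, (fun z => z ◃ b)^[n + 1] a = b := by
  intro a b
  set Ap : Equiv.Perm Q := Rack.act' a with hAp
  set Bp : Equiv.Perm Q := Rack.act' b with hBp
  have hAmem : Ap ∈ InnGrp Q := Subgroup.subset_closure ⟨a, rfl⟩
  have hBmem : Bp ∈ InnGrp Q := Subgroup.subset_closure ⟨b, rfl⟩
  -- the Engel condition pushed to Perm Q
  have hE : engel Bp⁻¹ (Bp * Ap⁻¹) n = 1 := by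
    have := hEngel (⟨Bp, hBmem⟩ * ⟨Ap, hAmem⟩⁻¹) (⟨Bp, hBmem⟩⁻¹)
    have h2 := congrArg ((InnGrp Q).subtype) this
    rwa [engel_map] at h2
  -- key induction
  have key : ∀ k : ℕ, (Rack.act' ((fun z => z ◃ b)^[k] a) : Equiv.Perm Q)
      = (engel Bp⁻¹ (Bp * Ap⁻¹) k)⁻¹ * Bp := by
    intro k
    induction k with
    | zero => simp [engel, mul_assoc, hAp]
    | succ k ih =>
      rw [Function.iterate_succ_apply', Rack.ad_conj, ih, ← hBp]
      simp only [engel]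
      group
  have hfix : Bp b = b := Quandle.fix
  have : (fun z => z ◃ b)^[n + 1] a = (engel Bp⁻¹ (Bp * Ap⁻¹) n)⁻¹ (Bp b) := by
    rw [Function.iterate_succ_apply', ← Rack.act'_apply, key n]
    rfl
  rw [this, hfix, hE]
  rfl
end

section
/- Let Q be a quandle belonging to the class tOS_n for some n (every orbit series stabilizes at a one-element quandle within n steps) and let P be a subquandle of Q. Then P belongs to tOS_n. -/
/-- An orbit series starting at the subquandle `S`: a chain `S = Q₀ ≥ Q₁ ≥ …` where
`Q_{i+1} = Orb(x_i, Q_i)` is the orbit of the chosen element `x_i ∈ Q_i`. -/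
def IsOrbitSeriesFrom {Q : Type*} (op : Q → Q → Q) (S : Set Q)
    (Qs : ℕ → Set Q) (xs : ℕ → Q) : Prop :=
  Qs 0 = S ∧ ∀ i, xs i ∈ Qs i ∧ Qs (i + 1) = OrbIn op (Qs i) (xs i)

/-- If a quandle `Q` belongs to the class `tOS_n` (every orbit series of `Q` reaches a
one-element quandle within `n` steps) and `P` is a subquandle of `Q`, then `P` belongs
to `tOS_n`. -/
theorem tOSn_closed_under_subquandles {Q : Type*} (op : Q → Q → Q)
    (hidem : ∀ a, op a a = a)
    (hbij : ∀ a, Function.Bijective (op a))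
    (hdist : ∀ a b c, op a (op b c) = op (op a b) (op a c))
    (n : ℕ)
    (hQ : ∀ Qs xs, IsOrbitSeriesFrom op Set.univ Qs xs → ∃ a, Qs n = {a})
    (P : Set Q)
    (hPop : ∀ a ∈ P, ∀ b ∈ P, op a b ∈ P)
    (hPinv : ∀ a ∈ P, ∀ b ∈ P, ∀ c, op a c = b → c ∈ P) :
    ∀ Qs xs, IsOrbitSeriesFrom op P Qs xs → ∃ a, Qs n = {a} := by
  have mono : ∀ (S T : Set Q), S ⊆ T → ∀ x, OrbIn op S x ⊆ OrbIn op T x := by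
    intro S T hST x y hy
    exact Relation.ReflTransGen.mono (p := orbRel op T)
      (fun p q ⟨s, hs, h⟩ => ⟨s, hST hs, h⟩) _ _ hy
  rintro Qs xs ⟨h0, hstep⟩
  -- the dominating orbit series starting from `univ`, using the same elements
  set Qs' : ℕ → Set Q := fun i => Nat.rec Set.univ (fun i' S => OrbIn op S (xs i')) i
    with hQs'
  have hsub : ∀ i, Qs i ⊆ Qs' i := by
    intro i
    induction i with
    | zero => simp [hQs', h0, Set.subset_univ]
    | succ i ih =>
      have := (hstep i).2
      rw [this]
      exact mono _ _ ih (xs i)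
  have hseries : IsOrbitSeriesFrom op Set.univ Qs' xs := by
    refine ⟨rfl, fun i => ⟨hsub i ((hstep i).1), rfl⟩⟩
  obtain ⟨a, ha⟩ := hQ Qs' xs hseries
  refine ⟨a, ?_⟩
  have hx : xs n ∈ Qs n := (hstep n).1
  have hsubn : Qs n ⊆ {a} := ha ▸ hsub n
  have hxa : xs n = a := hsubn hx
  apply Set.eq_singleton_iff_unique_mem.mpr
  exact ⟨hxa ▸ hx, fun y hy => hsubn hy⟩
end

section
/- Let Q be a quandle satisfying the descending orbit series condition (every orbit series eventually stabilizes). Then every orbit series of Q is principal, i.e., for every orbit series {Q_i} there exists x ∈ ⋂_i Q_i such that Q_{i+1} = Orb(x, Q_i) for all i. -/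
/-- If a quandle `Q` satisfies the descending orbit series condition (every orbit series
stabilizes), then every orbit series of `Q` is principal: there exists `x` in the
intersection of the series such that `Q_{i+1} = Orb(x, Q_i)` for all `i`. -/
theorem descending_implies_principal {Q : Type*} (op : Q → Q → Q)
    (hidem : ∀ a, op a a = a)
    (hbij : ∀ a, Function.Bijective (op a))
    (hdist : ∀ a b c, op a (op b c) = op (op a b) (op a c))
    (hOS : ∀ Qs xs, IsOrbitSeriesFrom op Set.univ Qs xs → ∃ k, Qs (k + 1) = Qs k) :
    ∀ Qs xs, IsOrbitSeriesFrom op Set.univ Qs xs →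
      ∃ x : Q, (∀ i, x ∈ Qs i) ∧ ∀ i, Qs (i + 1) = OrbIn op (Qs i) x := by
  intro Qs xs h
  obtain ⟨h0, hstep⟩ := h
  -- the one-step relation is symmetric
  have hsym : ∀ (S : Set Q) p q, orbRel op S p q → orbRel op S q p := by
    rintro S p q ⟨s, hs, h | h⟩
    · exact ⟨s, hs, Or.inr h⟩
    · exact ⟨s, hs, Or.inl h⟩
  -- hence membership in orbits is symmetric
  have hsymT : ∀ (S : Set Q) x y, y ∈ OrbIn op S x → x ∈ OrbIn op S y := by
    intro S x y hy
    induction hy with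
    | refl => exact Relation.ReflTransGen.refl
    | tail _ hstep' ih =>
      exact Relation.ReflTransGen.trans (Relation.ReflTransGen.single (hsym _ _ _ hstep')) ih
  -- so orbits of equivalent points coincide
  have horbEq : ∀ (S : Set Q) x y, y ∈ OrbIn op S x → OrbIn op S y = OrbIn op S x := by
    intro S x y hy
    ext z
    constructor
    · intro hz; exact Relation.ReflTransGen.trans hy hz
    · intro hz; exact Relation.ReflTransGen.trans (hsymT S x y hy) hz
  -- monotonicity of the relation in S
  have hrelMono : ∀ (S T : Set Q), S ⊆ T → ∀ p q, orbRel op S p q → orbRel op T p q := by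
    rintro S T hST p q ⟨s, hs, hor⟩
    exact ⟨s, hST hs, hor⟩
  -- each Qs i is closed under one-step moves by its own elements, and the chain decreases
  have hclosed : ∀ i, (∀ p ∈ Qs i, ∀ q, orbRel op (Qs i) p q → q ∈ Qs i) := by
    intro i
    induction i with
    | zero => intro p _ q _; rw [h0]; trivial
    | succ n ih =>
      -- Qs (n+1) = OrbIn op (Qs n) (xs n) ⊆ Qs n
      have hsub : Qs (n + 1) ⊆ Qs n := by
        rw [(hstep n).2]
        intro y hy
        induction hy with
        | refl => exact (hstep n).1
        | tail _ hstep' ih2 => exact ih _ ih2 _ hstep'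
      intro p hp q hq
      rw [(hstep n).2] at hp ⊢
      exact Relation.ReflTransGen.tail hp (hrelMono _ _ hsub _ _ hq)
  have hsub : ∀ i, Qs (i + 1) ⊆ Qs i := by
    intro i
    rw [(hstep i).2]
    intro y hy
    induction hy with
    | refl => exact (hstep i).1
    | tail _ hstep' ih2 => exact hclosed i _ ih2 _ hstep'
  have hmono : ∀ i j, i ≤ j → Qs j ⊆ Qs i := by
    intro i j hij
    induction hij with
    | refl => exact subset_rfl
    | step h ih => exact fun x hx => ih (hsub _ hx)
  obtain ⟨k, hk⟩ := hOS Qs xs ⟨h0, hstep⟩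
  -- from the stabilization point on, the series is constant
  have hconst : ∀ j, Qs (k + j) = Qs k := by
    intro j
    induction j with
    | zero => rfl
    | succ n ih =>
      have hx : xs (k + n) ∈ OrbIn op (Qs k) (xs k) := by
        have : xs (k + n) ∈ Qs (k + n) := (hstep (k + n)).1
        rw [ih, ← hk, (hstep k).2] at this
        exact this
      calc Qs (k + (n + 1)) = OrbIn op (Qs (k + n)) (xs (k + n)) := (hstep (k + n)).2
        _ = OrbIn op (Qs k) (xs (k + n)) := by rw [ih]
        _ = OrbIn op (Qs k) (xs k) := horbEq _ _ _ hx
        _ = Qs (k + 1) := ((hstep k).2).symm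
        _ = Qs k := hk
  have hxk : ∀ i, xs k ∈ Qs i := by
    intro i
    rcases le_or_gt i k with hik | hki
    · exact hmono i k hik ((hstep k).1)
    · have : Qs i = Qs k := by
        have := hconst (i - k)
        rwa [Nat.add_sub_cancel' (le_of_lt hki)] at this
      rw [this]; exact (hstep k).1
  refine ⟨xs k, hxk, fun i => ?_⟩
  have hxk1 : xs k ∈ Qs (i + 1) := hxk (i + 1)
  rw [(hstep i).2] at hxk1 ⊢
  exact (horbEq _ _ _ hxk1).symm
end

section
/- Let Q be a quandle and U = {Q_i} an orbit series of Q. Then U is the principal orbit series of an element x if and only if x ∈ ⋂_{i∈ℕ} Q_i. In particular, if x lies in ⋂ Q_i, then Orb(x, Q_i) = Q_{i+1} for all i. -/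
/-- Let `Q` be a quandle and `{Q_i}` an orbit series of `Q`. Then the series is the
principal orbit series of an element `x` (i.e., it arises from the constant sequence
`x_i = x`) if and only if `x ∈ ⋂ᵢ Q_i`. In particular, if `x` lies in all the `Q_i`,
then `Orb(x, Q_i) = Q_{i+1}` for all `i`. -/
theorem principal_iff_mem_inter {Q : Type*} (op : Q → Q → Q)
    (hidem : ∀ a, op a a = a)
    (hbij : ∀ a, Function.Bijective (op a))
    (hdist : ∀ a b c, op a (op b c) = op (op a b) (op a c))
    (Qs : ℕ → Set Q) (xs : ℕ → Q)
    (hser : IsOrbitSeriesFrom op Set.univ Qs xs) (x : Q) :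
    IsOrbitSeriesFrom op Set.univ Qs (fun _ => x) ↔ ∀ i, x ∈ Qs i := by
  obtain ⟨h0, hstep⟩ := hser
  constructor
  · rintro ⟨-, h⟩ i
    exact (h i).1
  · intro hx
    refine ⟨h0, fun i => ⟨hx i, ?_⟩⟩
    rw [(hstep i).2]
    have hsymm : Symmetric (orbRel op (Qs i)) := by
      rintro p q ⟨s, hs, h⟩
      exact ⟨s, hs, h.symm⟩
    have hsymm' : Symmetric (Relation.ReflTransGen (orbRel op (Qs i))) := by
      haveI : Std.Symm (orbRel op (Qs i)) := ⟨fun a b h => hsymm h⟩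
      exact fun a b h => Std.Symm.symm a b h
    have hxin : Relation.ReflTransGen (orbRel op (Qs i)) (xs i) x := by
      have := hx (i + 1)
      rw [(hstep i).2] at this
      exact this
    ext z
    exact ⟨fun h => Relation.ReflTransGen.trans (hsymm' hxin) h,
      fun h => Relation.ReflTransGen.trans hxin h⟩
end

section
/- A quandle Q belongs to tOS (every orbit series stabilizes at a one-element quandle) if and only if Q satisfies the descending orbit series condition (every orbit series stabilizes) and Q has no non-trivial connected subquandles. -/
lemma self_mem_orbIn {Q : Type*} (op : Q → Q → Q) (S : Set Q) (x : Q) :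
    x ∈ OrbIn op S x := Relation.ReflTransGen.refl

lemma orbIn_mono {Q : Type*} (op : Q → Q → Q) {S T : Set Q} (h : S ⊆ T) (x : Q) :
    OrbIn op S x ⊆ OrbIn op T x := by
  intro y hy
  refine Relation.ReflTransGen.mono ?_ _ _ hy
  rintro p q ⟨s, hs, hc⟩
  exact ⟨s, h hs, hc⟩

lemma orbIn_subset {Q : Type*} (op : Q → Q → Q) {S : Set Q}
    (hclosed : ∀ a ∈ S, ∀ b ∈ S, op a b ∈ S)
    (hinv : ∀ a ∈ S, ∀ b ∈ S, ∀ c, op a c = b → c ∈ S)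
    {x : Q} (hx : x ∈ S) : OrbIn op S x ⊆ S := by
  intro y hy
  induction hy with
  | refl => exact hx
  | tail _ hr ih =>
    obtain ⟨s, hs, hc | hc⟩ := hr
    · exact hc ▸ hclosed s hs _ ih
    · exact hinv s hs _ ih _ hc.symm

/-- The orbit is itself closed under `op`. -/
lemma orbIn_closed {Q : Type*} (op : Q → Q → Q) {S : Set Q}
    (hclosed : ∀ a ∈ S, ∀ b ∈ S, op a b ∈ S)
    (hinv : ∀ a ∈ S, ∀ b ∈ S, ∀ c, op a c = b → c ∈ S)
    {x : Q} (hx : x ∈ S) :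
    ∀ a ∈ OrbIn op S x, ∀ b ∈ OrbIn op S x, op a b ∈ OrbIn op S x := by
  intro a ha b hb
  exact Relation.ReflTransGen.tail hb
    ⟨a, orbIn_subset op hclosed hinv hx ha, Or.inl rfl⟩

/-- The orbit is closed under inverse translations. -/
lemma orbIn_inv_closed {Q : Type*} (op : Q → Q → Q) {S : Set Q}
    (hclosed : ∀ a ∈ S, ∀ b ∈ S, op a b ∈ S)
    (hinv : ∀ a ∈ S, ∀ b ∈ S, ∀ c, op a c = b → c ∈ S)
    {x : Q} (hx : x ∈ S) :
    ∀ a ∈ OrbIn op S x, ∀ b ∈ OrbIn op S x, ∀ c, op a c = b → c ∈ OrbIn op S x := by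
  intro a ha b hb c hc
  exact Relation.ReflTransGen.tail hb
    ⟨a, orbIn_subset op hclosed hinv hx ha, Or.inr hc.symm⟩

lemma orbIn_singleton {Q : Type*} (op : Q → Q → Q)
    (hidem : ∀ a, op a a = a) (hbij : ∀ a, Function.Bijective (op a)) (a : Q) :
    OrbIn op {a} a = {a} := by
  apply Set.Subset.antisymm
  · intro y hy
    induction hy with
    | refl => rfl
    | @tail m y _ hr ih =>
      have hm : m = a := ih
      subst hm
      obtain ⟨s, hs, hc | hc⟩ := hr
      all_goals have hs' : s = m := hs
      all_goals subst hs'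
      · simp [hc, hidem]
      · exact (hbij s).1 (hc.symm.trans (hidem s).symm)
  · rintro y rfl
    exact self_mem_orbIn op _ _

/-- A quandle `Q` belongs to `tOS` (every orbit series stabilizes at a one-element
quandle) if and only if `Q` satisfies the descending orbit series condition (every
orbit series stabilizes) and `Q` has no non-trivial connected subquandles. -/
theorem tOS_iff_OS_and_no_connected {Q : Type*} (op : Q → Q → Q)
    (hidem : ∀ a, op a a = a)
    (hbij : ∀ a, Function.Bijective (op a))
    (hdist : ∀ a b c, op a (op b c) = op (op a b) (op a c)) :
    (∀ Qs xs, IsOrbitSeriesFrom op Set.univ Qs xs → ∃ k, ∃ a : Q, Qs k = {a}) ↔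
      ((∀ Qs xs, IsOrbitSeriesFrom op Set.univ Qs xs → ∃ k, Qs (k + 1) = Qs k) ∧
        (∀ S : Set Q, (∀ a ∈ S, ∀ b ∈ S, op a b ∈ S) →
          (∀ a ∈ S, ∀ b ∈ S, ∀ c, op a c = b → c ∈ S) →
          (∃ x ∈ S, OrbIn op S x = S) → S.Subsingleton)) := by
  constructor
  · intro htos
    constructor
    · intro Qs xs hser
      obtain ⟨k, a, hk⟩ := htos Qs xs hser
      refine ⟨k, ?_⟩
      have hx := (hser.2 k).1
      rw [hk] at hx
      rcases hx with rfl
      rw [(hser.2 k).2, hk, orbIn_singleton op hidem hbij]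
    · intro S _ _ ⟨x, hx, horb⟩
      by_contra hns
      rw [Set.not_subsingleton_iff] at hns
      obtain ⟨a, ha, b, hb, hab⟩ := hns
      -- build the constant series
      set Qs : ℕ → Set Q := fun n => Nat.rec Set.univ (fun _ T => OrbIn op T x) n with hQs
      have hSsub : ∀ n, S ⊆ Qs n := by
        intro n
        induction n with
        | zero => exact Set.subset_univ S
        | succ n ih =>
          calc S = OrbIn op S x := horb.symm
          _ ⊆ OrbIn op (Qs n) x := orbIn_mono op ih x
          _ = Qs (n + 1) := rfl
      have hser : IsOrbitSeriesFrom op Set.univ Qs (fun _ => x) :=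
        ⟨rfl, fun i => ⟨hSsub i hx, rfl⟩⟩
      obtain ⟨k, c, hk⟩ := htos Qs (fun _ => x) hser
      have ha' : a ∈ ({c} : Set Q) := hk ▸ hSsub k ha
      have hb' : b ∈ ({c} : Set Q) := hk ▸ hSsub k hb
      exact hab (ha'.trans hb'.symm)
  · rintro ⟨hos, hconn⟩ Qs xs hser
    -- every term of the series is a subquandle
    have hclos : ∀ n, (∀ a ∈ Qs n, ∀ b ∈ Qs n, op a b ∈ Qs n) ∧
        (∀ a ∈ Qs n, ∀ b ∈ Qs n, ∀ c, op a c = b → c ∈ Qs n) := by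
      intro n
      induction n with
      | zero =>
        rw [hser.1]
        exact ⟨fun _ _ _ _ => trivial, fun _ _ _ _ _ _ => trivial⟩
      | succ n ih =>
        rw [(hser.2 n).2]
        exact ⟨orbIn_closed op ih.1 ih.2 (hser.2 n).1,
          orbIn_inv_closed op ih.1 ih.2 (hser.2 n).1⟩
    obtain ⟨k, hk⟩ := hos Qs xs hser
    have hsub : (Qs k).Subsingleton := by
      refine hconn (Qs k) (hclos k).1 (hclos k).2 ⟨xs k, (hser.2 k).1, ?_⟩
      rw [← (hser.2 k).2]; exact hk
    refine ⟨k, xs k, ?_⟩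
    exact Set.Subsingleton.eq_singleton_of_mem hsub (hser.2 k).1
end

section
/- The class of quandles with no non-trivial connected subquandles is closed under arbitrary direct products: if {Q_i}_{i∈I} is a family of quandles none of which has a connected subquandle with more than one element, then the product quandle ∏_{i∈I} Q_i has no connected subquandle with more than one element. -/
/-- The class of quandles with no non-trivial connected subquandles is closed under
arbitrary direct products: if `{Q_i}` is a family of quandles none of which has a
connected subquandle with more than one element, then the product quandle `∏ᵢ Q_i`
(with componentwise operation) has no connected subquandle with more than one
element. -/
theorem no_connected_subquandles_prod {I : Type*} {Q : I → Type*}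
    (op : ∀ i, Q i → Q i → Q i)
    (hidem : ∀ i a, op i a a = a)
    (hbij : ∀ i a, Function.Bijective (op i a))
    (hdist : ∀ i a b c, op i a (op i b c) = op i (op i a b) (op i a c))
    (hfac : ∀ i (S : Set (Q i)), (∀ a ∈ S, ∀ b ∈ S, op i a b ∈ S) →
      (∀ a ∈ S, ∀ b ∈ S, ∀ c, op i a c = b → c ∈ S) →
      (∃ x ∈ S, OrbIn (op i) S x = S) → S.Subsingleton) :
    ∀ S : Set (∀ i, Q i),
      (∀ a ∈ S, ∀ b ∈ S, (fun i => op i (a i) (b i)) ∈ S) →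
      (∀ a ∈ S, ∀ b ∈ S, ∀ c, (fun i => op i (a i) (c i)) = b → c ∈ S) →
      (∃ x ∈ S, OrbIn (fun a b i => op i (a i) (b i)) S x = S) → S.Subsingleton := by
  intro S hmul hinv ⟨x, hxS, hOrb⟩
  -- project to coordinate i
  have key : ∀ i, ((fun a => a i) '' S).Subsingleton := by
    intro i
    set T : Set (Q i) := (fun a => a i) '' S with hT
    have hTmul : ∀ a ∈ T, ∀ b ∈ T, op i a b ∈ T := by
      rintro _ ⟨a, haS, rfl⟩ _ ⟨b, hbS, rfl⟩
      exact ⟨_, hmul a haS b hbS, rfl⟩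
    have hTinv : ∀ a ∈ T, ∀ b ∈ T, ∀ c, op i a c = b → c ∈ T := by
      rintro _ ⟨a, haS, rfl⟩ _ ⟨b, hbS, rfl⟩ c hc
      -- solve componentwise
      have hsol : ∀ j, ∃ d, op j (a j) d = b j := fun j => (hbij j (a j)).2 (b j)
      choose d hd using hsol
      have hdS : d ∈ S := hinv a haS b hbS d (funext hd)
      have : d i = c := (hbij i (a i)).1 (by rw [hd i, hc])
      exact ⟨d, hdS, this⟩
    apply hfac i T hTmul hTinv
    refine ⟨x i, ⟨x, hxS, rfl⟩, Set.Subset.antisymm ?_ ?_⟩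
    · -- OrbIn ⊆ T : orbit steps stay in T
      intro y hy
      induction hy with
      | refl => exact ⟨x, hxS, rfl⟩
      | tail _ hstep ih =>
        obtain ⟨s, hsT, hcase⟩ := hstep
        rcases hcase with h | h
        · rw [h]; exact hTmul s hsT _ ih
        · exact hTinv s hsT _ ih _ h.symm
    · -- T ⊆ OrbIn : project the connectivity of S
      rintro _ ⟨b, hbS, rfl⟩
      have hb : Relation.ReflTransGen (orbRel (fun a b j => op j (a j) (b j)) S) x b := by
        rw [← hOrb] at hbS; exact hbS
      refine Relation.ReflTransGen.lift (fun a => a i) ?_ _ _ hb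
      rintro p q ⟨s, hsS, hcase⟩
      refine ⟨s i, ⟨s, hsS, rfl⟩, ?_⟩
      rcases hcase with h | h
      · exact Or.inl (congrFun h i)
      · exact Or.inr (congrFun h i)
  intro a haS b hbS
  funext i
  exact key i ⟨a, haS, rfl⟩ ⟨b, hbS, rfl⟩
end

section
/- Every subquandle of the Takasaki quandle Alex(ℤ, −) (the quandle on ℤ with a▷b = 2a − b) is of the form c + aℤ for some integers a ≥ 0 and c; consequently, Alex(ℤ, −) has no connected subquandle with more than one element. -/
/-- The arithmetic progression through `s` with step `s - t` lies in any subquandle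
containing `s` and `t`. -/
lemma takasaki_ap_mem (S : Set ℤ) (hS : ∀ a ∈ S, ∀ b ∈ S, 2 * a - b ∈ S)
    {s t : ℤ} (hs : s ∈ S) (ht : t ∈ S) : ∀ k : ℤ, s + k * (s - t) ∈ S := by
  have key : ∀ k : ℤ, s + k * (s - t) ∈ S ∧ s + (k + 1) * (s - t) ∈ S := by
    intro k
    induction k using Int.induction_on with
    | zero =>
      refine ⟨by simpa using hs, ?_⟩
      have h := hS s hs t ht
      have e : 2 * s - t = s + (0 + 1) * (s - t) := by ring
      rwa [e] at h
    | succ n ih =>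
      constructor
      · exact ih.2
      · have h := hS _ ih.2 _ ih.1
        have e : 2 * (s + ((n : ℤ) + 1) * (s - t)) - (s + (n : ℤ) * (s - t))
            = s + ((n : ℤ) + 1 + 1) * (s - t) := by ring
        rwa [e] at h
    | pred n ih =>
      constructor
      · have h := hS _ ih.1 _ ih.2
        have e : 2 * (s + (-(n : ℤ)) * (s - t)) - (s + (-(n : ℤ) + 1) * (s - t))
            = s + (-(n : ℤ) - 1) * (s - t) := by ring
        rwa [e] at h
      · have e : (-(n : ℤ) - 1 + 1) = -(n : ℤ) := by ring
        rw [e]; exact ih.1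
  exact fun k => (key k).1

/-- Every nonempty subquandle of the Takasaki quandle on `ℤ` is an arithmetic
progression. -/
lemma takasaki_subquandle_form (S : Set ℤ) (hne : S.Nonempty)
    (hS : ∀ a ∈ S, ∀ b ∈ S, 2 * a - b ∈ S) :
    ∃ a c : ℤ, 0 ≤ a ∧ S = {x : ℤ | ∃ k : ℤ, x = c + a * k} := by
  obtain ⟨c, hc⟩ := hne
  by_cases htriv : ∀ s ∈ S, s = c
  · refine ⟨0, c, le_refl 0, ?_⟩
    ext x
    simp only [Set.mem_setOf_eq]
    constructor
    · intro hx; exact ⟨0, by simpa using htriv x hx⟩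
    · rintro ⟨k, rfl⟩; simpa using hc
  · push_neg at htriv
    obtain ⟨s₁, hs₁, hs₁c⟩ := htriv
    -- the set of positive differences
    have hNe : ∃ n : ℕ, 0 < n ∧ ∃ s ∈ S, ∃ t ∈ S, s - t = (n : ℤ) := by
      rcases lt_or_gt_of_ne hs₁c with h | h
      · exact ⟨(c - s₁).toNat, by omega, c, hc, s₁, hs₁, by omega⟩
      · exact ⟨(s₁ - c).toNat, by omega, s₁, hs₁, c, hc, by omega⟩
    classical
    set n₀ := Nat.find hNe with hn₀
    obtain ⟨hn₀pos, s₀, hs₀, t₀, ht₀, hdiff⟩ := Nat.find_spec hNe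
    set a : ℤ := (n₀ : ℤ) with ha
    have hapos : 0 < a := by rw [ha]; exact_mod_cast hn₀pos
    -- the AP through s₀ with step a is inside S
    have hAP : ∀ k : ℤ, s₀ + k * a ∈ S := by
      intro k
      have := takasaki_ap_mem S hS hs₀ ht₀ k
      rwa [hdiff] at this
    -- a divides every difference with s₀
    have hdvd : ∀ s ∈ S, a ∣ s - s₀ := by
      intro s hs
      by_contra hnd
      set r := (s - s₀) % a with hr
      have hr0 : 0 ≤ r := Int.emod_nonneg _ (by omega)
      have hra : r < a := Int.emod_lt_of_pos _ hapos
      have hrne : r ≠ 0 := fun h => hnd (Int.dvd_of_emod_eq_zero (by omega))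
      have hv : s₀ + (s - s₀) / a * a ∈ S := hAP _
      have hsv : s - (s₀ + (s - s₀) / a * a) = r := by
        have h1 := Int.emod_add_mul_ediv (s - s₀) a
        have h2 : (s - s₀) / a * a = a * ((s - s₀) / a) := mul_comm _ _
        linarith
      have : r.toNat < n₀ := by omega
      exact Nat.find_min hNe this ⟨by omega, s, hs, _, hv, by omega⟩
    refine ⟨a, c, le_of_lt hapos, ?_⟩
    obtain ⟨m, hm⟩ := hdvd c hc
    ext x
    simp only [Set.mem_setOf_eq]
    constructor
    · intro hx
      obtain ⟨k, hk⟩ := hdvd x hx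
      exact ⟨k - m, by linarith [hm, hk, mul_sub a k m]⟩
    · rintro ⟨k, rfl⟩
      have := hAP (m + k)
      convert this using 1
      linarith [hm, mul_add a m k]

/-- Every (nonempty) subquandle of the Takasaki quandle `Alex(ℤ, −)` (the quandle on `ℤ`
with `a ▷ b = 2a − b`) is of the form `c + aℤ` for some integers `a ≥ 0` and `c`;
consequently, `Alex(ℤ, −)` has no connected subquandle with more than one element. -/
theorem takasaki_int_subquandles :
    (∀ S : Set ℤ, S.Nonempty → (∀ a ∈ S, ∀ b ∈ S, 2 * a - b ∈ S) →
      ∃ a c : ℤ, 0 ≤ a ∧ S = {x : ℤ | ∃ k : ℤ, x = c + a * k}) ∧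
    (∀ S : Set ℤ, S.Nonempty → (∀ a ∈ S, ∀ b ∈ S, 2 * a - b ∈ S) →
      (∃ x ∈ S, OrbIn (fun a b : ℤ => 2 * a - b) S x = S) → S.Subsingleton) := by
  constructor
  · exact takasaki_subquandle_form
  · intro S hne hS ⟨x, hx, horb⟩
    obtain ⟨a, c, ha, hSeq⟩ := takasaki_subquandle_form S hne hS
    -- every element of the orbit of x is ≡ x mod 2a
    have horbdvd : ∀ y ∈ OrbIn (fun a b : ℤ => 2 * a - b) S x, (2 * a) ∣ y - x := by
      intro y hy
      induction hy with
      | refl => simp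
      | tail _ hstep ih =>
        rename_i b cc _
        obtain ⟨s, hsS, hcase⟩ := hstep
        have hcc : cc = 2 * s - b := by rcases hcase with h | h <;> simp only [] at h <;> omega
        have hsx : a ∣ s - x := by
          have h1 : s ∈ {x : ℤ | ∃ k : ℤ, x = c + a * k} := hSeq ▸ hsS
          have h2 : x ∈ {x : ℤ | ∃ k : ℤ, x = c + a * k} := hSeq ▸ hx
          obtain ⟨k1, hk1⟩ := h1
          obtain ⟨k2, hk2⟩ := h2
          exact ⟨k1 - k2, by rw [hk1, hk2]; ring⟩
        obtain ⟨u, hu⟩ := hsx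
        obtain ⟨v, hv⟩ := ih
        exact ⟨u - v, by rw [hcc]; linarith [hu, hv, mul_sub (2*a) u v]⟩
    -- a must be 0
    have ha0 : a = 0 := by
      by_contra h
      have hapos : 0 < a := lt_of_le_of_ne ha (Ne.symm h)
      have hxa : x + a ∈ S := by
        have h2 : x ∈ {x : ℤ | ∃ k : ℤ, x = c + a * k} := hSeq ▸ hx
        obtain ⟨k2, hk2⟩ := h2
        rw [hSeq]
        exact ⟨k2 + 1, by rw [hk2]; ring⟩
      have := horbdvd (x + a) (by rw [horb]; exact hxa)
      simp only [add_sub_cancel_left] at this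
      have := Int.le_of_dvd hapos this
      omega
    intro p hp q hq
    rw [hSeq] at hp hq
    obtain ⟨k1, hk1⟩ := hp
    obtain ⟨k2, hk2⟩ := hq
    rw [hk1, hk2, ha0]
    ring
end

section
/- Let G be a simple group, g ∈ G of order two, and let ĝ be conjugation by g. If G has exponent dividing 2^k, then the generalized Alexander quandle Q = Alex(G, ĝ) with operation x▷y = ĝ(y x^{-1}) x satisfies the identity: the (k+1)-fold right iteration (…((a▷1)▷1)…)▷1 equals 1 for every a ∈ Q. More precisely, defining t(x) = ĝ(x)^{-1} x, one has t^n(x) = t(x)^{2^{n-1}} for all n ≥ 1 and x ∈ G. -/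
/-- Let `G` be a simple group, `g ∈ G` of order two, and let `ĝ` be conjugation by `g`
(`ĝ x = g⁻¹ * x * g`). If `G` has exponent dividing `2^k`, then in the generalized
Alexander quandle `Q = Alex(G, ĝ)` with `x ▷ y = ĝ (y * x⁻¹) * x`, the `(k+1)`-fold
right iteration `(…((a ▷ 1) ▷ 1)…) ▷ 1` equals `1` for every `a`. More precisely,
setting `t x = ĝ(x)⁻¹ * x`, one has `tⁿ x = (t x)^(2^(n-1))` for all `n ≥ 1`. -/
theorem alexander_simple_exponent_two_pow {G : Type*} [Group G]
    (hG : IsSimpleGroup G) (g : G) (hg : orderOf g = 2)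
    (k : ℕ) (hexp : ∀ x : G, x ^ (2 ^ k) = 1) :
    (∀ (x : G) (n : ℕ), 1 ≤ n →
      (fun z : G => (g⁻¹ * z * g)⁻¹ * z)^[n] x =
        ((g⁻¹ * x * g)⁻¹ * x) ^ (2 ^ (n - 1))) ∧
    (∀ a : G, (fun z : G => (g⁻¹ * (1 * z⁻¹) * g) * z)^[k + 1] a = 1) := by
  have hg2 : g * g = 1 := by
    have := pow_orderOf_eq_one g
    rw [hg] at this
    simpa [pow_succ, pow_one] using this
  have hginv : g⁻¹ = g := inv_eq_of_mul_eq_one_right hg2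
  have hg2' : ∀ a : G, g * (g * a) = a := by
    intro a; rw [← mul_assoc, hg2, one_mul]
  set t : G → G := fun z => (g⁻¹ * z * g)⁻¹ * z with ht
  have hconj : ∀ x : G, g⁻¹ * (t x) * g = (t x)⁻¹ := by
    intro x
    simp [ht, mul_inv_rev, hginv, mul_assoc, hg2']
  have hpow : ∀ (x : G) (m : ℕ), g⁻¹ * (t x) ^ m * g = ((t x)⁻¹) ^ m := by
    intro x m
    induction m with
    | zero => simp [hginv, hg2]
    | succ n ih =>
        rw [pow_succ, pow_succ,
          show g⁻¹ * ((t x) ^ n * t x) * g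
            = (g⁻¹ * (t x) ^ n * g) * (g⁻¹ * (t x) * g) by group,
          ih, hconj]
  have hdouble : ∀ (x : G) (m : ℕ), t ((t x) ^ m) = (t x) ^ (2 * m) := by
    intro x m
    calc t ((t x) ^ m) = (g⁻¹ * (t x) ^ m * g)⁻¹ * (t x) ^ m := rfl
      _ = (t x) ^ m * (t x) ^ m := by rw [hpow, inv_pow, inv_inv]
      _ = (t x) ^ (2 * m) := by rw [← pow_add, two_mul]
  have key : ∀ (x : G) (n : ℕ), 1 ≤ n → t^[n] x = (t x) ^ (2 ^ (n - 1)) := by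
    intro x n hn
    induction n with
    | zero => omega
    | succ m ih =>
        rcases Nat.eq_zero_or_pos m with hm | hm
        · subst hm; simp
        · have hm' : m - 1 + 1 = m := by omega
          rw [Function.iterate_succ_apply', ih hm, hdouble,
            Nat.add_sub_cancel, ← hm', pow_succ', Nat.add_sub_cancel]
  refine ⟨key, ?_⟩
  intro a
  have hft : (fun z : G => (g⁻¹ * (1 * z⁻¹) * g) * z) = t := by
    funext z
    simp [ht, mul_inv_rev, mul_assoc]
  rw [hft, key a (k + 1) (Nat.le_add_left 1 k)]
  simpa using hexp (t a)
end
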